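/- The determinant of the energy–momentum endomorphism Q equals (E₀² − L²)² + 8·E₀·V³ − 4·A⁴. -/

import Mathlib

open Matrix Complex

/-- The energy–momentum endomorphism `Q` of an asymptotically anti-de Sitter
initial data set, as a 4×4 complex matrix. -/
noncomputable def QMatrix (E₀ c₁ c₂ c₃ c₁' c₂' c₃' J₁ J₂ J₃ : ℝ) :
    Matrix (Fin 4) (Fin 4) ℂ :=
  let w₁ : ℂ := (c₃' : ℂ) - I * J₃
  let w₂p : ℂ := -(c₁' : ℂ) + (J₂ : ℂ) + I * ((c₂' : ℂ) + J₁)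
  let w₂m : ℂ := -(c₁' : ℂ) - (J₂ : ℂ) - I * ((c₂' : ℂ) - J₁)
  !![(E₀ : ℂ) - c₃, (c₁ : ℂ) - I * c₂, w₁, w₂p;
     (c₁ : ℂ) + I * c₂, (E₀ : ℂ) + c₃, w₂m, -w₁;
     starRingEnd ℂ w₁, starRingEnd ℂ w₂m, (E₀ : ℂ) + c₃, -(c₁ : ℂ) + I * c₂;
     starRingEnd ℂ w₂p, -(starRingEnd ℂ w₁), -(c₁ : ℂ) - I * c₂, (E₀ : ℂ) - c₃]

set_option maxHeartbeats 4000000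

lemma det_fin_four' (a b c d e f g h i j k l m n o p : ℂ) :
    (!![a, b, c, d; e, f, g, h; i, j, k, l; m, n, o, p] : Matrix (Fin 4) (Fin 4) ℂ).det =
      a * (f * (k * p - l * o) - g * (j * p - l * n) + h * (j * o - k * n))
    - b * (e * (k * p - l * o) - g * (i * p - l * m) + h * (i * o - k * m))
    + c * (e * (j * p - l * n) - f * (i * p - l * m) + h * (i * n - j * m))
    - d * (e * (j * o - k * n) - f * (i * o - k * m) + g * (i * n - j * m)) := by
  rw [Matrix.det_succ_row_zero]
  simp [Fin.sum_univ_succ, Matrix.det_fin_three, Matrix.submatrix, Fin.succAbove,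
    show (Fin.succ 2 : Fin 4) = 3 from rfl, show (Fin.castSucc 2 : Fin 4) = 2 from rfl,
    show (Fin.castSucc 1 : Fin 4) = 1 from rfl, show (Fin.castSucc 0 : Fin 4) = 0 from rfl]
  ring

/-- The determinant of the energy–momentum endomorphism `Q` equals
`(E₀² − L²)² + 8·E₀·V³ − 4·A⁴`. -/
theorem det_QMatrix (E₀ c₁ c₂ c₃ c₁' c₂' c₃' J₁ J₂ J₃ L A V : ℝ)
    (hL0 : 0 ≤ L)
    (hL : L ^ 2 = ![c₁, c₂, c₃] ⬝ᵥ ![c₁, c₂, c₃]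
      + ![c₁', c₂', c₃'] ⬝ᵥ ![c₁', c₂', c₃'] + ![J₁, J₂, J₃] ⬝ᵥ ![J₁, J₂, J₃])
    (hA0 : 0 ≤ A)
    (hA : A ^ 4 =
        (![c₁, c₂, c₃] ⨯₃ ![c₁', c₂', c₃']) ⬝ᵥ (![c₁, c₂, c₃] ⨯₃ ![c₁', c₂', c₃'])
      + (![c₁, c₂, c₃] ⨯₃ ![J₁, J₂, J₃]) ⬝ᵥ (![c₁, c₂, c₃] ⨯₃ ![J₁, J₂, J₃])
      + (![c₁', c₂', c₃'] ⨯₃ ![J₁, J₂, J₃]) ⬝ᵥ (![c₁', c₂', c₃'] ⨯₃ ![J₁, J₂, J₃]))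
    (hV : V ^ 3 = ![c₁, c₂, c₃] ⬝ᵥ (![c₁', c₂', c₃'] ⨯₃ ![J₁, J₂, J₃])) :
    (QMatrix E₀ c₁ c₂ c₃ c₁' c₂' c₃' J₁ J₂ J₃).det =
      (((E₀ ^ 2 - L ^ 2) ^ 2 + 8 * E₀ * V ^ 3 - 4 * A ^ 4 : ℝ) : ℂ) := by
  simp only [crossProduct, dotProduct, Fin.sum_univ_succ, Fin.sum_univ_zero,
    LinearMap.mk₂_apply, Matrix.cons_val_zero, Matrix.cons_val_one, Matrix.head_cons,
    Matrix.cons_val_two, Matrix.tail_cons, Matrix.vecHead, Matrix.vecTail,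
    Function.comp, Matrix.cons_val_succ] at hL hA hV
  rw [hL, hA, hV, show QMatrix E₀ c₁ c₂ c₃ c₁' c₂' c₃' J₁ J₂ J₃ =
    !![(E₀ : ℂ) - c₃, (c₁ : ℂ) - I * c₂, (c₃' : ℂ) - I * J₃,
         -(c₁' : ℂ) + (J₂ : ℂ) + I * ((c₂' : ℂ) + J₁);
       (c₁ : ℂ) + I * c₂, (E₀ : ℂ) + c₃, -(c₁' : ℂ) - (J₂ : ℂ) - I * ((c₂' : ℂ) - J₁),
         -((c₃' : ℂ) - I * J₃);
       starRingEnd ℂ ((c₃' : ℂ) - I * J₃),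
         starRingEnd ℂ (-(c₁' : ℂ) - (J₂ : ℂ) - I * ((c₂' : ℂ) - J₁)),
         (E₀ : ℂ) + c₃, -(c₁ : ℂ) + I * c₂;
       starRingEnd ℂ (-(c₁' : ℂ) + (J₂ : ℂ) + I * ((c₂' : ℂ) + J₁)),
         -(starRingEnd ℂ ((c₃' : ℂ) - I * J₃)), -(c₁ : ℂ) - I * c₂, (E₀ : ℂ) - c₃]
    from rfl, det_fin_four']
  simp only [map_sub, map_add, map_neg, _root_.map_mul, Complex.conj_ofReal, Complex.conj_I]
  push_cast
  have h3 : I ^ 3 = -I := by simp [pow_succ, Complex.I_sq]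
  have h4 : I ^ 4 = 1 := by simp [pow_succ, Complex.I_sq]
  ring_nf
  simp only [Complex.I_sq, h3, h4]
  ring
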